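/- arXiv:1504.05290 — 3 statements merged into one kernel-verified Lean document; each statement's English description precedes it below -/
import Mathlib

section
/- Let C ≥ 1, let θ₁,…,θ_m be real-valued functions on a probability space (Ω,μ) forming a martingale difference sequence with |θ_i| ≤ C almost everywhere for all i, and let f : Ω → ℂ be measurable with |f| ≤ C almost everywhere. Then Σ_{S ⊆ {1,…,m}} C^{−4|S|} |∫_Ω (∏_{i∈S} θ_i) f dμ|² ≤ C², where the product over the empty set is 1. -/
open MeasureTheory Finset


-- Step 1: key zero-integral lemma for MDS products
theorem mds_prod_integral_zero (C : ℝ) (m : ℕ) (Ω : Type) [mΩ : MeasurableSpace Ω]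
    (μ : Measure Ω) [IsProbabilityMeasure μ] (θ : Fin m → Ω → ℝ)
    (hθmeas : ∀ i, Measurable (θ i))
    (hθbd : ∀ i, ∀ᵐ x ∂μ, |θ i x| ≤ C)
    (hmds : ∀ s : Fin m,
      μ[θ s | ⨆ i : {i : Fin m // i < s},
          MeasurableSpace.comap (θ i) inferInstance] =ᵐ[μ] 0)
    (hint : ∀ S : Finset (Fin m), Integrable (fun x => ∏ i ∈ S, θ i x) μ)
    (S : Finset (Fin m)) (hS : S.Nonempty) :
    ∫ x, ∏ i ∈ S, θ i x ∂μ = 0 := by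
  classical
  set s := S.max' hS with hs
  have hsS : s ∈ S := S.max'_mem hS
  have h𝒢 : (⨆ i : {i : Fin m // i < s},
      MeasurableSpace.comap (θ i) inferInstance) ≤ mΩ :=
    iSup_le fun i => (hθmeas i).comap_le
  set 𝒢 : MeasurableSpace Ω := ⨆ i : {i : Fin m // i < s},
      MeasurableSpace.comap (θ i) inferInstance with h𝒢def
  have hg : StronglyMeasurable[𝒢] (fun x => ∏ i ∈ S.erase s, θ i x) := by
    apply Measurable.stronglyMeasurable
    apply Finset.measurable_prod
    intro i hi
    have hilt : i < s := S.lt_max'_of_mem_erase_max' hS hi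
    have : MeasurableSpace.comap (θ i) inferInstance ≤ 𝒢 :=
      le_iSup (fun j : {j : Fin m // j < s} =>
        MeasurableSpace.comap (θ j) inferInstance) ⟨i, hilt⟩
    exact measurable_iff_comap_le.mpr this
  have hmul : Integrable ((fun x => ∏ i ∈ S.erase s, θ i x) * θ s) μ := by
    have h := hint S
    have heq : (fun x => ∏ i ∈ S, θ i x)
        = (fun x => ∏ i ∈ S.erase s, θ i x) * θ s := by
      funext x
      simp [Pi.mul_apply, Finset.prod_erase_mul S _ hsS]
    rwa [heq] at h
  have hθsint : Integrable (θ s) μ := by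
    have h := hint {s}; simpa using h
  have hpull := condExp_mul_of_stronglyMeasurable_left (μ := μ) hg hmul hθsint
  calc ∫ x, ∏ i ∈ S, θ i x ∂μ
      = ∫ x, ((fun x => ∏ i ∈ S.erase s, θ i x) * θ s) x ∂μ := by
        congr 1; funext x
        simp [Pi.mul_apply, Finset.prod_erase_mul S _ hsS]
    _ = ∫ x, (μ[(fun x => ∏ i ∈ S.erase s, θ i x) * θ s | 𝒢]) x ∂μ :=
        (integral_condExp (μ := μ) (f := (fun x => ∏ i ∈ S.erase s, θ i x) * θ s) h𝒢).symm
    _ = 0 := by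
        have h0 : (μ[(fun x => ∏ i ∈ S.erase s, θ i x) * θ s | 𝒢]) =ᵐ[μ] 0 := by
          refine hpull.trans ?_
          filter_upwards [hmds s] with x hx
          simp only [Pi.mul_apply, Pi.zero_apply]
          exact mul_eq_zero_of_right _ hx
        rw [integral_congr_ae h0]
        simp

/-- Bessel-type bound for products of a martingale difference sequence.  If
`θ₁,…,θ_m` is a martingale difference sequence with `|θ_i| ≤ C` a.e. and `f` is
measurable with `|f| ≤ C` a.e., then
`∑_{S ⊆ {1,…,m}} C^{−4|S|} |∫ (∏_{i∈S} θ_i) f dμ|² ≤ C²`. -/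
theorem stmt12 (C : ℝ) (hC : 1 ≤ C) (m : ℕ) (Ω : Type) [MeasurableSpace Ω]
    (μ : Measure Ω) [IsProbabilityMeasure μ] (θ : Fin m → Ω → ℝ) (f : Ω → ℂ)
    (hθmeas : ∀ i, Measurable (θ i))
    (hθbd : ∀ i, ∀ᵐ x ∂μ, |θ i x| ≤ C)
    -- martingale difference sequence
    (hmds : ∀ s : Fin m,
      μ[θ s | ⨆ i : {i : Fin m // i < s},
          MeasurableSpace.comap (θ i) inferInstance] =ᵐ[μ] 0)
    (hfmeas : Measurable f) (hfbd : ∀ᵐ x ∂μ, ‖f x‖ ≤ C) :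
    ∑ S : Finset (Fin m),
        (C ^ (4 * S.card))⁻¹ * ‖∫ x, ((∏ i ∈ S, θ i x : ℝ) : ℂ) * f x ∂μ‖ ^ 2
      ≤ C ^ 2 := by
  classical
  have hC0 : (0:ℝ) < C := lt_of_lt_of_le one_pos hC
  set c : ℝ := (C ^ 2)⁻¹ with hcdef
  have hc0 : (0:ℝ) ≤ c := by positivity
  have hbd : ∀ᵐ x ∂μ, ∀ i, |θ i x| ≤ C := ae_all_iff.2 hθbd
  -- integrability of products of θ's
  have hint : ∀ S : Finset (Fin m), Integrable (fun x => ∏ i ∈ S, θ i x) μ := by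
    intro S
    refine (integrable_const (C ^ S.card)).mono'
      (Finset.measurable_prod S (fun i _ => hθmeas i)).aestronglyMeasurable ?_
    filter_upwards [hbd] with x hx
    calc ‖∏ i ∈ S, θ i x‖ = |∏ i ∈ S, θ i x| := rfl
      _ = ∏ i ∈ S, |θ i x| := Finset.abs_prod _ _
      _ ≤ ∏ i ∈ S, C := Finset.prod_le_prod (fun i _ => abs_nonneg _) (fun i _ => hx i)
      _ = C ^ S.card := by rw [Finset.prod_const]
  have hzero : ∀ S : Finset (Fin m), S.Nonempty → ∫ x, ∏ i ∈ S, θ i x ∂μ = 0 :=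
    mds_prod_integral_zero C m Ω μ θ hθmeas hθbd hmds hint
  -- the Fourier coefficients
  set a : Finset (Fin m) → ℂ :=
    fun S => ∫ x, ((∏ i ∈ S, θ i x : ℝ) : ℂ) * f x ∂μ with hadef
  -- signs
  set sgn : Bool → ℝ := fun b => if b then 1 else -1 with hsgndef
  have hsgn_abs : ∀ b, |sgn b| = 1 := by intro b; cases b <;> simp [hsgndef]
  -- Walsh functions
  set W : Finset (Fin m) → (Fin m → Bool) → ℝ :=
    fun S ε => ∏ i ∈ S, sgn (ε i) with hWdef
  -- integrability of (∏θ)·f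
  have hintf : ∀ S : Finset (Fin m),
      Integrable (fun x => ((∏ i ∈ S, θ i x : ℝ) : ℂ) * f x) μ := by
    intro S
    refine (integrable_const (C ^ S.card * C)).mono'
      ((Complex.measurable_ofReal.comp
        (Finset.measurable_prod S (fun i _ => hθmeas i))).mul
        hfmeas).aestronglyMeasurable ?_
    filter_upwards [hbd, hfbd] with x hx hfx
    rw [norm_mul, Complex.norm_real]
    have h1 : ‖∏ i ∈ S, θ i x‖ ≤ C ^ S.card := by
      calc ‖∏ i ∈ S, θ i x‖ = ∏ i ∈ S, |θ i x| := Finset.abs_prod _ _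
        _ ≤ ∏ i ∈ S, C := Finset.prod_le_prod (fun i _ => abs_nonneg _) (fun i _ => hx i)
        _ = C ^ S.card := by rw [Finset.prod_const]
    exact mul_le_mul h1 hfx (norm_nonneg _) (by positivity)
  -- Riesz products
  set P : (Fin m → Bool) → Ω → ℝ :=
    fun ε x => ∏ i, (1 + c * sgn (ε i) * θ i x) with hPdef
  have hPexp : ∀ ε x,
      P ε x = ∑ S : Finset (Fin m), (c ^ S.card * W S ε) * ∏ i ∈ S, θ i x := by
    intro ε x
    have h := Finset.prod_add (fun i => c * sgn (ε i) * θ i x)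
      (fun _ => (1:ℝ)) Finset.univ
    simp only [Finset.prod_const_one, mul_one] at h
    calc P ε x = ∏ i, (c * sgn (ε i) * θ i x + 1) := by
          simp only [hPdef]; exact Finset.prod_congr rfl fun i _ => by ring
      _ = ∑ S ∈ Finset.univ.powerset, ∏ i ∈ S, (c * sgn (ε i) * θ i x) := h
      _ = ∑ S : Finset (Fin m), (c ^ S.card * W S ε) * ∏ i ∈ S, θ i x := by
          rw [Finset.powerset_univ]
          refine Finset.sum_congr rfl fun S _ => ?_
          rw [hWdef]
          rw [show (∏ i ∈ S, (c * sgn (ε i) * θ i x))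
              = (∏ _i ∈ S, c) * (∏ i ∈ S, sgn (ε i)) * ∏ i ∈ S, θ i x by
            rw [← Finset.prod_mul_distrib, ← Finset.prod_mul_distrib]]
          rw [Finset.prod_const]
  have hPint : ∀ ε, Integrable (P ε) μ := by
    intro ε
    have : P ε = fun x =>
        ∑ S : Finset (Fin m), (c ^ S.card * W S ε) * ∏ i ∈ S, θ i x :=
      funext (hPexp ε)
    rw [this]
    exact integrable_finset_sum _ fun S _ => (hint S).const_mul _
  have hPone : ∀ ε, ∫ x, P ε x ∂μ = 1 := by
    intro ε
    simp_rw [hPexp]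
    rw [integral_finset_sum _ (fun S _ => (hint S).const_mul _)]
    rw [Finset.sum_eq_single (∅ : Finset (Fin m))]
    · simp [hWdef]
    · intro S _ hS
      rw [integral_const_mul, hzero S (Finset.nonempty_of_ne_empty hS),
        mul_zero]
    · simp
  have hPpos : ∀ ε, ∀ᵐ x ∂μ, 0 ≤ P ε x := by
    intro ε
    filter_upwards [hbd] with x hx
    apply Finset.prod_nonneg
    intro i _
    have h1 : |c * sgn (ε i) * θ i x| ≤ 1 := by
      rw [abs_mul, abs_mul, hsgn_abs, mul_one, abs_of_nonneg hc0]
      calc c * |θ i x| ≤ c * C := mul_le_mul_of_nonneg_left (hx i) hc0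
        _ = C⁻¹ := by rw [hcdef]; field_simp
        _ ≤ 1 := inv_le_one_of_one_le₀ hC
    linarith [neg_abs_le (c * sgn (ε i) * θ i x)]
  -- g
  set g : (Fin m → Bool) → ℂ := fun ε => ∫ x, (P ε x : ℂ) * f x ∂μ with hgdef
  have hintPf : ∀ ε, Integrable (fun x => (P ε x : ℂ) * f x) μ := by
    intro ε
    have : (fun x => (P ε x : ℂ) * f x) = fun x =>
        ∑ S : Finset (Fin m), ((c ^ S.card * W S ε : ℝ) : ℂ)
          * (((∏ i ∈ S, θ i x : ℝ) : ℂ) * f x) := by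
      funext x
      rw [hPexp]
      push_cast
      rw [Finset.sum_mul]
      exact Finset.sum_congr rfl fun S _ => by ring
    rw [this]
    exact integrable_finset_sum _ fun S _ => (hintf S).const_mul _
  have hgexp : ∀ ε, g ε = ∑ S : Finset (Fin m),
      ((c ^ S.card * W S ε : ℝ) : ℂ) * a S := by
    intro ε
    show (∫ x, (P ε x : ℂ) * f x ∂μ) = _
    have : (fun x => (P ε x : ℂ) * f x) = fun x =>
        ∑ S : Finset (Fin m), ((c ^ S.card * W S ε : ℝ) : ℂ)
          * (((∏ i ∈ S, θ i x : ℝ) : ℂ) * f x) := by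
      funext x
      rw [hPexp]
      push_cast
      rw [Finset.sum_mul]
      exact Finset.sum_congr rfl fun S _ => by ring
    rw [this, integral_finset_sum _ (fun S _ => (hintf S).const_mul _)]
    exact Finset.sum_congr rfl fun S _ => integral_const_mul _ _
  have hgle : ∀ ε, ‖g ε‖ ≤ C := by
    intro ε
    calc ‖g ε‖ ≤ ∫ x, ‖(P ε x : ℂ) * f x‖ ∂μ := norm_integral_le_integral_norm _
      _ ≤ ∫ x, C * P ε x ∂μ := by
          refine integral_mono_ae (hintPf ε).norm ((hPint ε).const_mul C) ?_
          filter_upwards [hPpos ε, hfbd] with x hPx hfx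
          rw [norm_mul, Complex.norm_real, Real.norm_eq_abs, abs_of_nonneg hPx]
          calc P ε x * ‖f x‖ ≤ P ε x * C :=
              mul_le_mul_of_nonneg_left hfx hPx
            _ = C * P ε x := mul_comm _ _
      _ = C := by rw [integral_const_mul, hPone, mul_one]
  -- orthogonality
  have horth : ∀ S T : Finset (Fin m),
      ∑ ε : Fin m → Bool, W S ε * W T ε = if S = T then (2:ℝ) ^ m else 0 := by
    intro S T
    have hten : ∀ ε : Fin m → Bool, W S ε * W T ε
        = ∏ i : Fin m, ((if i ∈ S then sgn (ε i) else 1)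
            * (if i ∈ T then sgn (ε i) else 1)) := by
      intro ε
      rw [Finset.prod_mul_distrib, hWdef]
      congr 1 <;> rw [Finset.prod_ite_mem, Finset.univ_inter]
    simp_rw [hten]
    rw [show (Finset.univ : Finset (Fin m → Bool))
        = Fintype.piFinset (fun _ => (Finset.univ : Finset Bool)) from
      (Fintype.piFinset_univ).symm]
    rw [Finset.sum_prod_piFinset (Finset.univ : Finset Bool)
      (fun i b => (if i ∈ S then sgn b else 1) * (if i ∈ T then sgn b else 1))]
    by_cases hST : S = T
    · subst hST
      simp only [if_pos rfl]
      calc ∏ i : Fin m, ∑ b : Bool, ((if i ∈ S then sgn b else 1)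
            * (if i ∈ S then sgn b else 1))
          = ∏ _i : Fin m, (2:ℝ) := by
            refine Finset.prod_congr rfl fun i _ => ?_
            by_cases hi : i ∈ S <;> simp [hi, hsgndef] <;> norm_num
        _ = (2:ℝ) ^ m := by rw [Finset.prod_const, Finset.card_univ, Fintype.card_fin]
    · rw [if_neg hST]
      have : ∃ i, ¬ (i ∈ S ↔ i ∈ T) := by
        by_contra h
        push_neg at h
        exact hST (Finset.ext h)
      obtain ⟨i, hi⟩ := this
      refine Finset.prod_eq_zero (Finset.mem_univ i) ?_
      by_cases hiS : i ∈ S <;> by_cases hiT : i ∈ T <;>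
        simp [hiS, hiT, hsgndef] at hi ⊢
  -- Parseval
  have hexp : ∀ ε : Fin m → Bool, (‖g ε‖ ^ 2 : ℂ)
      = ∑ S : Finset (Fin m), ∑ T : Finset (Fin m),
          (((c ^ S.card * W S ε) * (c ^ T.card * W T ε) : ℝ) : ℂ)
            * (a S * (starRingEnd ℂ) (a T)) := by
    intro ε
    have h1 : ((‖g ε‖ ^ 2 : ℝ) : ℂ) = g ε * (starRingEnd ℂ) (g ε) := by
      rw [Complex.mul_conj]
      norm_cast
      rw [← Complex.sq_norm]
    push_cast at h1 ⊢
    rw [h1, hgexp ε, map_sum, Finset.sum_mul_sum]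
    refine Finset.sum_congr rfl fun S _ => Finset.sum_congr rfl fun T _ => ?_
    rw [map_mul, Complex.conj_ofReal]
    push_cast
    ring
  have keyC : ∑ ε : Fin m → Bool, ((‖g ε‖ ^ 2 : ℝ) : ℂ)
      = (2:ℂ) ^ m * ∑ S : Finset (Fin m),
          ((c ^ (2 * S.card) : ℝ) : ℂ) * ((‖a S‖ ^ 2 : ℝ) : ℂ) := by
    calc ∑ ε : Fin m → Bool, ((‖g ε‖ ^ 2 : ℝ) : ℂ)
        = ∑ S : Finset (Fin m), ∑ T : Finset (Fin m),
            ((∑ ε : Fin m → Bool,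
              (c ^ S.card * W S ε) * (c ^ T.card * W T ε) : ℝ) : ℂ)
              * (a S * (starRingEnd ℂ) (a T)) := by
          push_cast
          simp_rw [hexp]
          push_cast
          rw [Finset.sum_comm]
          refine Finset.sum_congr rfl fun S _ => ?_
          rw [Finset.sum_comm]
          refine Finset.sum_congr rfl fun T _ => ?_
          rw [Finset.sum_mul]
      _ = ∑ S : Finset (Fin m), ∑ T : Finset (Fin m),
            (((c ^ S.card * c ^ T.card) * (if S = T then (2:ℝ) ^ m else 0) : ℝ) : ℂ)
              * (a S * (starRingEnd ℂ) (a T)) := by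
          refine Finset.sum_congr rfl fun S _ => Finset.sum_congr rfl fun T _ => ?_
          have hr : (∑ ε : Fin m → Bool, (c ^ S.card * W S ε) * (c ^ T.card * W T ε))
              = (c ^ S.card * c ^ T.card) * (if S = T then (2:ℝ) ^ m else 0) := by
            rw [← horth S T, Finset.mul_sum]
            exact Finset.sum_congr rfl fun ε _ => by ring
          rw [hr]
      _ = ∑ S : Finset (Fin m),
            (((2:ℝ) ^ m * c ^ (2 * S.card) : ℝ) : ℂ)
              * (a S * (starRingEnd ℂ) (a S)) := by
          refine Finset.sum_congr rfl fun S _ => ?_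
          rw [Finset.sum_eq_single S]
          · rw [if_pos rfl]
            congr 2
            rw [two_mul, pow_add]
            ring
          · intro T _ hT
            rw [if_neg fun h => hT h.symm]
            simp
          · intro h
            exact absurd (Finset.mem_univ S) h
      _ = (2:ℂ) ^ m * ∑ S : Finset (Fin m),
            ((c ^ (2 * S.card) : ℝ) : ℂ) * ((‖a S‖ ^ 2 : ℝ) : ℂ) := by
          rw [Finset.mul_sum]
          refine Finset.sum_congr rfl fun S _ => ?_
          rw [Complex.mul_conj]
          rw [show Complex.normSq (a S) = ‖a S‖ ^ 2 by
            rw [← Complex.sq_norm]]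
          push_cast
          ring
  have keyR : ∑ ε : Fin m → Bool, ‖g ε‖ ^ 2
      = (2:ℝ) ^ m * ∑ S : Finset (Fin m), c ^ (2 * S.card) * ‖a S‖ ^ 2 := by
    exact_mod_cast keyC
  have hcard : Fintype.card (Fin m → Bool) = 2 ^ m := by simp
  have hsum : ∑ S : Finset (Fin m), c ^ (2 * S.card) * ‖a S‖ ^ 2 ≤ C ^ 2 := by
    have h1 : ∑ ε : Fin m → Bool, ‖g ε‖ ^ 2 ≤ (2:ℝ) ^ m * C ^ 2 := by
      calc ∑ ε : Fin m → Bool, ‖g ε‖ ^ 2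
          ≤ ∑ _ε : Fin m → Bool, C ^ 2 :=
            Finset.sum_le_sum fun ε _ =>
              pow_le_pow_left₀ (norm_nonneg _) (hgle ε) 2
        _ = (2:ℝ) ^ m * C ^ 2 := by
            rw [Finset.sum_const, Finset.card_univ, hcard, nsmul_eq_mul]
            push_cast
            ring
    rw [keyR] at h1
    exact le_of_mul_le_mul_left h1 (by positivity)
  show ∑ S : Finset (Fin m), (C ^ (4 * S.card))⁻¹ * ‖a S‖ ^ 2 ≤ C ^ 2
  calc ∑ S : Finset (Fin m), (C ^ (4 * S.card))⁻¹ * ‖a S‖ ^ 2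
      = ∑ S : Finset (Fin m), c ^ (2 * S.card) * ‖a S‖ ^ 2 := by
        refine Finset.sum_congr rfl fun S _ => ?_
        congr 1
        rw [hcdef, inv_pow, ← pow_mul,
          show 2 * (2 * S.card) = 4 * S.card by ring]
    _ ≤ C ^ 2 := hsum
end

section
/- There is a universal constant K such that for every integer n ≥ 2, every real p ≥ 2, and all complex coefficients a₁,…,a_n, one has (√(log n)/√n) · ‖Σ_{i=1}^n a_i W_i‖_{L^p} ≤ K √p (Σ_{i=1}^n |a_i|²)^{1/2}, where W₁,…,W_n are the first n Walsh functions. -/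
open MeasureTheory ProbabilityTheory Finset
open scoped symmDiff ENNReal NNReal

set_option linter.unusedSectionVars false

variable {Ω : Type} [MeasurableSpace Ω] {μ : Measure Ω} [IsProbabilityMeasure μ]
  {r : ℕ → Ω → ℝ}

lemma walsh_ae_pm (hr : ∀ k, Measurable (r k))
    (hmap : ∀ k, μ.map (r k)
      = (2⁻¹ : ENNReal) • (Measure.dirac (-1) + Measure.dirac 1)) :
    ∀ᵐ x ∂μ, ∀ k, r k x = 1 ∨ r k x = -1 := by
  rw [ae_all_iff]
  intro k
  have hs : MeasurableSet (({1, -1} : Set ℝ)ᶜ) := by measurability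
  have h0 : μ (r k ⁻¹' (({1, -1} : Set ℝ)ᶜ)) = 0 := by
    rw [← Measure.map_apply (hr k) hs, hmap k]
    simp [Measure.dirac_apply' _ hs, Set.indicator]
  have hset : {x | ¬ (r k x = 1 ∨ r k x = -1)} = r k ⁻¹' (({1, -1} : Set ℝ)ᶜ) := by
    ext x; simp [not_or]
  rw [ae_iff, hset]; exact h0

lemma walsh_integral_r (hr : ∀ k, Measurable (r k))
    (hmap : ∀ k, μ.map (r k)
      = (2⁻¹ : ENNReal) • (Measure.dirac (-1) + Measure.dirac 1)) (k : ℕ) :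
    ∫ x, r k x ∂μ = 0 := by
  have h1 : ∫ x, r k x ∂μ = ∫ y, y ∂(μ.map (r k)) :=
    (integral_map (hr k).aemeasurable aestronglyMeasurable_id).symm
  have hi : ∀ a : ℝ, Integrable (fun y : ℝ => y) (Measure.dirac a) :=
    fun a => (integrable_const a).congr (ae_eq_dirac (fun y : ℝ => y)).symm
  rw [h1, hmap k, integral_smul_measure, integral_add_measure (hi _) (hi _)]
  simp [integral_dirac]

lemma walsh_integrable_RR (hr : ∀ k, Measurable (r k))
    (hpm : ∀ᵐ x ∂μ, ∀ k, r k x = 1 ∨ r k x = -1) (S T : Finset ℕ) :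
    Integrable (fun x => (∏ k ∈ S, r k x) * ∏ k ∈ T, r k x) μ := by
  have habs : ∀ (U : Finset ℕ) (x : Ω), (∀ k, r k x = 1 ∨ r k x = -1) →
      |∏ k ∈ U, r k x| = 1 := by
    intro U x hx
    rw [Finset.abs_prod]
    refine Finset.prod_eq_one fun k _ => ?_
    rcases hx k with h | h <;> rw [h] <;> norm_num
  refine Integrable.mono' (integrable_const 1)
    (((S.measurable_prod fun k _ => hr k).mul
      (T.measurable_prod fun k _ => hr k)).aestronglyMeasurable) ?_
  filter_upwards [hpm] with x hx
  rw [Real.norm_eq_abs, abs_mul, habs S x hx, habs T x hx, one_mul]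

lemma walsh_integrable_R (hr : ∀ k, Measurable (r k))
    (hpm : ∀ᵐ x ∂μ, ∀ k, r k x = 1 ∨ r k x = -1) (T : Finset ℕ) :
    Integrable (fun x => ∏ k ∈ T, r k x) μ := by
  simpa using walsh_integrable_RR hr hpm ∅ T

lemma walsh_integral_R_zero (hr : ∀ k, Measurable (r k))
    (hind : iIndepFun r μ)
    (hmap : ∀ k, μ.map (r k)
      = (2⁻¹ : ENNReal) • (Measure.dirac (-1) + Measure.dirac 1))
    (hpm : ∀ᵐ x ∂μ, ∀ k, r k x = 1 ∨ r k x = -1)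
    {T : Finset ℕ} (hT : T.Nonempty) :
    ∫ x, ∏ k ∈ T, r k x ∂μ = 0 := by
  obtain ⟨j, hj⟩ := hT
  have hsplit : ∀ x, ∏ k ∈ T, r k x = (∏ k ∈ T.erase j, r k x) * r j x := by
    intro x; rw [Finset.prod_erase_mul T _ hj]
  have hIndep : IndepFun (∏ k ∈ T.erase j, r k) (r j) μ :=
    hind.indepFun_finset_prod_of_notMem hr (Finset.notMem_erase j T)
  have hIndep' : IndepFun (fun x => ∏ k ∈ T.erase j, r k x) (r j) μ := by
    have : (∏ k ∈ T.erase j, r k) = fun x => ∏ k ∈ T.erase j, r k x := by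
      funext x; simp
    rwa [this] at hIndep
  calc ∫ x, ∏ k ∈ T, r k x ∂μ
      = ∫ x, (∏ k ∈ T.erase j, r k x) * r j x ∂μ := by
        exact integral_congr_ae (Filter.Eventually.of_forall hsplit)
    _ = (∫ x, ∏ k ∈ T.erase j, r k x ∂μ) * ∫ x, r j x ∂μ :=
        hIndep'.integral_mul_eq_mul_integral (walsh_integrable_R hr hpm _).aestronglyMeasurable
          (by simpa using (walsh_integrable_R hr hpm {j}).aestronglyMeasurable)
    _ = 0 := by rw [walsh_integral_r hr hmap j, mul_zero]

lemma walsh_orthonormal (hr : ∀ k, Measurable (r k))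
    (hind : iIndepFun r μ)
    (hmap : ∀ k, μ.map (r k)
      = (2⁻¹ : ENNReal) • (Measure.dirac (-1) + Measure.dirac 1))
    (hpm : ∀ᵐ x ∂μ, ∀ k, r k x = 1 ∨ r k x = -1) (S T : Finset ℕ) :
    ∫ x, (∏ k ∈ S, r k x) * ∏ k ∈ T, r k x ∂μ = if S = T then 1 else 0 := by
  have hcongr : (fun x => (∏ k ∈ S, r k x) * ∏ k ∈ T, r k x)
      =ᵐ[μ] fun x => ∏ k ∈ S ∆ T, r k x := by
    filter_upwards [hpm] with x hx
    have hS : ∏ k ∈ S, r k x = (∏ k ∈ S \ T, r k x) * ∏ k ∈ S ∩ T, r k x := by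
      rw [← Finset.prod_union (Finset.disjoint_sdiff_inter S T), Finset.sdiff_union_inter]
    have hT : ∏ k ∈ T, r k x = (∏ k ∈ T \ S, r k x) * ∏ k ∈ T ∩ S, r k x := by
      rw [← Finset.prod_union (Finset.disjoint_sdiff_inter T S), Finset.sdiff_union_inter]
    have hsq : (∏ k ∈ S ∩ T, r k x) * ∏ k ∈ T ∩ S, r k x = 1 := by
      rw [Finset.inter_comm T S, ← Finset.prod_mul_distrib]
      refine Finset.prod_eq_one fun k _ => ?_
      rcases hx k with h | h <;> rw [h] <;> norm_num
    have hdisj : Disjoint (S \ T) (T \ S) := disjoint_sdiff_sdiff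
    calc (∏ k ∈ S, r k x) * ∏ k ∈ T, r k x
        = ((∏ k ∈ S \ T, r k x) * ∏ k ∈ T \ S, r k x) *
            ((∏ k ∈ S ∩ T, r k x) * ∏ k ∈ T ∩ S, r k x) := by rw [hS, hT]; ring
      _ = ∏ k ∈ (S \ T) ∪ (T \ S), r k x := by rw [hsq, mul_one, Finset.prod_union hdisj]
      _ = ∏ k ∈ S ∆ T, r k x := by rw [symmDiff_def, Finset.sup_eq_union]
  rw [integral_congr_ae hcongr]
  by_cases h : S = T
  · rw [if_pos h, h, symmDiff_self]
    simp
  · rw [if_neg h]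
    refine walsh_integral_R_zero hr hind hmap hpm ?_
    rw [Finset.nonempty_iff_ne_empty]
    intro hc
    exact h (symmDiff_eq_bot.mp (by simpa using hc))

lemma walsh_parseval_real (hr : ∀ k, Measurable (r k))
    (hind : iIndepFun r μ)
    (hmap : ∀ k, μ.map (r k)
      = (2⁻¹ : ENNReal) • (Measure.dirac (-1) + Measure.dirac 1))
    (hpm : ∀ᵐ x ∂μ, ∀ k, r k x = 1 ∨ r k x = -1)
    {n : ℕ} (S : Fin n → Finset ℕ) (hS : Function.Injective S) (c : Fin n → ℝ) :
    ∫ x, (∑ i, c i * ∏ k ∈ S i, r k x) ^ 2 ∂μ = ∑ i, c i ^ 2 := by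
  have hexp : ∀ x, (∑ i, c i * ∏ k ∈ S i, r k x) ^ 2
      = ∑ i, ∑ j, (c i * c j) * ((∏ k ∈ S i, r k x) * ∏ k ∈ S j, r k x) := by
    intro x
    rw [sq, Finset.sum_mul_sum]
    exact Finset.sum_congr rfl fun i _ => Finset.sum_congr rfl fun j _ => by ring
  have hint : ∀ i j : Fin n,
      Integrable (fun x => (c i * c j) * ((∏ k ∈ S i, r k x) * ∏ k ∈ S j, r k x)) μ :=
    fun i j => (walsh_integrable_RR hr hpm _ _).const_mul _
  calc ∫ x, (∑ i, c i * ∏ k ∈ S i, r k x) ^ 2 ∂μ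
      = ∫ x, ∑ i, ∑ j, (c i * c j) * ((∏ k ∈ S i, r k x) * ∏ k ∈ S j, r k x) ∂μ :=
        integral_congr_ae (Filter.Eventually.of_forall hexp)
    _ = ∑ i, ∑ j, ∫ x, (c i * c j) * ((∏ k ∈ S i, r k x) * ∏ k ∈ S j, r k x) ∂μ := by
        rw [integral_finset_sum _ fun i _ => integrable_finset_sum _ fun j _ => hint i j]
        exact Finset.sum_congr rfl fun i _ => integral_finset_sum _ fun j _ => hint i j
    _ = ∑ i, ∑ j, (c i * c j) * if S i = S j then 1 else 0 := by
        refine Finset.sum_congr rfl fun i _ => Finset.sum_congr rfl fun j _ => ?_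
        rw [integral_const_mul, walsh_orthonormal hr hind hmap hpm]
    _ = ∑ i, c i ^ 2 := by
        refine Finset.sum_congr rfl fun i _ => ?_
        simp [hS.eq_iff, mul_ite, sq]

lemma walsh_scalar_core (n : ℕ) (hn : 2 ≤ n) (p : ℝ) (hp : 2 ≤ p) :
    Real.sqrt (Real.log n) * (n:ℝ) ^ (-(1/p)) ≤ Real.sqrt p := by
  have hp0 : (0:ℝ) < p := by linarith
  have hn1 : (1:ℝ) < n := by exact_mod_cast hn.trans_lt' one_lt_two
  have hn0 : (0:ℝ) < n := by linarith
  have hL : 0 < Real.log n := Real.log_pos hn1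
  set t : ℝ := Real.log n / p with ht_def
  have ht : 0 < t := div_pos hL hp0
  have hlog : Real.log n = p * t := by rw [ht_def]; field_simp
  have hrw : (n:ℝ) ^ (-(1/p)) = Real.exp (-t) := by
    rw [Real.rpow_def_of_pos hn0]
    congr 1
    rw [ht_def]
    field_simp
  rw [hrw, hlog, Real.sqrt_mul hp0.le]
  have h1 : Real.sqrt t ≤ Real.exp t := by
    rcases le_or_gt t 1 with h | h
    · have : Real.sqrt t ≤ 1 := by
        nlinarith [Real.sq_sqrt ht.le, Real.sqrt_nonneg t]
      linarith [Real.add_one_le_exp t]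
    · have h2 : Real.sqrt t ≤ t := by
        nlinarith [Real.sq_sqrt ht.le, Real.sqrt_nonneg t]
      linarith [Real.add_one_le_exp t]
  have h3 : Real.sqrt t * Real.exp (-t) ≤ 1 := by
    calc Real.sqrt t * Real.exp (-t) ≤ Real.exp t * Real.exp (-t) :=
          mul_le_mul_of_nonneg_right h1 (Real.exp_pos _).le
      _ = 1 := by rw [← Real.exp_add]; simp
  calc Real.sqrt p * Real.sqrt t * Real.exp (-t)
      = Real.sqrt p * (Real.sqrt t * Real.exp (-t)) := by ring
    _ ≤ Real.sqrt p * 1 := mul_le_mul_of_nonneg_left h3 (Real.sqrt_nonneg p)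
    _ = Real.sqrt p := mul_one _

lemma walsh_scalar (n : ℕ) (hn : 2 ≤ n) (p : ℝ) (hp : 2 ≤ p) (S2 : ℝ) (hS2 : 0 ≤ S2) :
    Real.sqrt (Real.log n) / Real.sqrt n *
        ((Real.sqrt n * Real.sqrt S2) ^ (p - 2) * S2) ^ (1/p)
      ≤ 1 * Real.sqrt p * Real.sqrt S2 := by
  have hp0 : (0:ℝ) < p := by linarith
  have hn0 : (0:ℝ) < n := by
    have : (2:ℝ) ≤ n := by exact_mod_cast hn
    linarith
  have hsn : (0:ℝ) < Real.sqrt n := Real.sqrt_pos.mpr hn0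
  have hs : (0:ℝ) ≤ Real.sqrt S2 := Real.sqrt_nonneg _
  set s : ℝ := Real.sqrt S2 with hs_def
  have hS2s : S2 = s ^ 2 := (Real.sq_sqrt hS2).symm
  have key : ((Real.sqrt n * s) ^ (p - 2) * S2) ^ (1/p)
      = Real.sqrt n ^ ((p - 2) * (1/p)) * s := by
    rw [Real.mul_rpow hsn.le hs, hS2s]
    have h2 : s ^ (2:ℕ) = s ^ ((2:ℕ):ℝ) := (Real.rpow_natCast s 2).symm
    rw [h2, mul_assoc]
    rw [← Real.rpow_add_of_nonneg hs (by linarith) (by norm_num : (0:ℝ) ≤ ((2:ℕ):ℝ))]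
    have hpe : p - 2 + ((2:ℕ):ℝ) = p := by push_cast; ring
    rw [hpe, Real.mul_rpow (Real.rpow_nonneg hsn.le _) (Real.rpow_nonneg hs _),
      ← Real.rpow_mul hsn.le, ← Real.rpow_mul hs]
    rw [mul_one_div_cancel (by linarith : p ≠ 0), Real.rpow_one]
  rw [key]
  have hscal : Real.sqrt (Real.log n) / Real.sqrt n * Real.sqrt n ^ ((p - 2) * (1/p))
      ≤ Real.sqrt p := by
    have hexp : Real.sqrt n ^ ((p - 2) * (1/p)) / Real.sqrt n
        = (n:ℝ) ^ (-(1/p)) := by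
      rw [div_eq_iff (ne_of_gt hsn)]
      have hsqrt : Real.sqrt n = (n:ℝ) ^ (1/(2:ℝ)) := Real.sqrt_eq_rpow _
      rw [hsqrt, ← Real.rpow_mul hn0.le, ← Real.rpow_add hn0]
      congr 1
      field_simp
      ring
    calc Real.sqrt (Real.log n) / Real.sqrt n * Real.sqrt n ^ ((p - 2) * (1/p))
        = Real.sqrt (Real.log n) * (Real.sqrt n ^ ((p - 2) * (1/p)) / Real.sqrt n) := by
          ring
      _ = Real.sqrt (Real.log n) * (n:ℝ) ^ (-(1/p)) := by rw [hexp]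
      _ ≤ Real.sqrt p := walsh_scalar_core n hn p hp
  calc Real.sqrt (Real.log n) / Real.sqrt n * (Real.sqrt n ^ ((p - 2) * (1/p)) * s)
      = (Real.sqrt (Real.log n) / Real.sqrt n * Real.sqrt n ^ ((p - 2) * (1/p))) * s := by
        ring
    _ ≤ Real.sqrt p * s := mul_le_mul_of_nonneg_right hscal hs
    _ = 1 * Real.sqrt p * s := by ring

/-- `Λ(p)` bound for the truncated Walsh system.  There is a universal `K` such that
for the Walsh system `W_i = ∏_{k : bit k of i is 1} r_k` built from i.i.d. uniform
`±1` coordinate functions `r_k` (any realization on a probability space), every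
`n ≥ 2`, `p ≥ 2`, and all complex coefficients,
`(√(log n)/√n) ‖∑_{i<n} a_i W_i‖_p ≤ K √p (∑ |a_i|²)^{1/2}`.
Since `i < n ≤ 2^n`, only the bits `k < n` of `i` occur in `W_i`. -/
theorem stmt17 :
    ∃ K : ℝ, 0 < K ∧
      ∀ (Ω : Type) [MeasurableSpace Ω] (μ : Measure Ω) [IsProbabilityMeasure μ]
        (r : ℕ → Ω → ℝ),
        (∀ k, Measurable (r k)) →
        -- the coordinates are independent
        iIndepFun r μ →
        -- each coordinate is uniform on {-1, 1}
        (∀ k, μ.map (r k)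
          = (2⁻¹ : ENNReal) • (Measure.dirac (-1) + Measure.dirac 1)) →
        ∀ (n : ℕ), 2 ≤ n → ∀ (p : ℝ), 2 ≤ p → ∀ a : Fin n → ℂ,
          ENNReal.ofReal (Real.sqrt (Real.log n) / Real.sqrt n) *
            eLpNorm
              (fun x => ∑ i, a i *
                ((∏ k ∈ Finset.range n,
                  if Nat.testBit (i : ℕ) k then r k x else 1 : ℝ) : ℂ))
              (ENNReal.ofReal p) μ
            ≤ ENNReal.ofReal (K * Real.sqrt p * Real.sqrt (∑ i, ‖a i‖ ^ 2)) := by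
  refine ⟨1, one_pos, ?_⟩
  intro Ω _ μ _ r hr hind hmap n hn p hp a
  have hpm : ∀ᵐ x ∂μ, ∀ k, r k x = 1 ∨ r k x = -1 := walsh_ae_pm hr hmap
  have hp0 : (0:ℝ) < p := by linarith
  -- the Walsh sets
  set Sf : Fin n → Finset ℕ := fun i => (Finset.range n).filter (fun k => Nat.testBit (i:ℕ) k)
    with hSf_def
  have hW : ∀ (i : Fin n) (x : Ω),
      (∏ k ∈ Finset.range n, if Nat.testBit (i:ℕ) k then r k x else 1) = ∏ k ∈ Sf i, r k x :=
    fun i x => (Finset.prod_filter _ _).symm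
  have hSinj : Function.Injective Sf := by
    intro i j h
    apply Fin.ext
    apply Nat.eq_of_testBit_eq
    intro k
    by_cases hk : k < n
    · have := Finset.ext_iff.mp h k
      simpa [hSf_def, Finset.mem_filter, Finset.mem_range, hk] using this
    · push_neg at hk
      have h2 : ∀ m : Fin n, (m:ℕ) < 2 ^ k :=
        fun m => lt_of_lt_of_le m.isLt (hk.trans (Nat.lt_two_pow_self).le)
      rw [Nat.testBit_eq_false_of_lt (h2 i), Nat.testBit_eq_false_of_lt (h2 j)]
  set f : Ω → ℂ := fun x => ∑ i, a i *
      ((∏ k ∈ Finset.range n, if Nat.testBit (i : ℕ) k then r k x else 1 : ℝ) : ℂ) with hf_def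
  set S2 : ℝ := ∑ i, ‖a i‖ ^ 2 with hS2_def
  have hS2nn : 0 ≤ S2 := Finset.sum_nonneg fun i _ => sq_nonneg _
  set B : ℝ := Real.sqrt n * Real.sqrt S2 with hB_def
  have hBnn : 0 ≤ B := mul_nonneg (Real.sqrt_nonneg _) (Real.sqrt_nonneg _)
  -- real and imaginary parts
  have hre : ∀ x, (f x).re = ∑ i, (a i).re * ∏ k ∈ Sf i, r k x := by
    intro x
    rw [hf_def, Complex.re_sum]
    refine Finset.sum_congr rfl fun i _ => ?_
    rw [Complex.mul_re, Complex.ofReal_re, Complex.ofReal_im, mul_zero, sub_zero, hW]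
  have him : ∀ x, (f x).im = ∑ i, (a i).im * ∏ k ∈ Sf i, r k x := by
    intro x
    rw [hf_def, Complex.im_sum]
    refine Finset.sum_congr rfl fun i _ => ?_
    rw [Complex.mul_im, Complex.ofReal_im, Complex.ofReal_re, mul_zero, zero_add, hW]
  have hnormsq : ∀ x, ‖f x‖ ^ 2
      = (∑ i, (a i).re * ∏ k ∈ Sf i, r k x) ^ 2 + (∑ i, (a i).im * ∏ k ∈ Sf i, r k x) ^ 2 := by
    intro x
    rw [← hre, ← him, Complex.sq_norm, Complex.normSq_apply]
    ring
  -- integrability of the squares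
  have hsq_int_aux : ∀ c : Fin n → ℝ,
      Integrable (fun x => (∑ i, c i * ∏ k ∈ Sf i, r k x) ^ 2) μ := by
    intro c
    have hexp : ∀ x, (∑ i, c i * ∏ k ∈ Sf i, r k x) ^ 2
        = ∑ i, ∑ j, (c i * c j) * ((∏ k ∈ Sf i, r k x) * ∏ k ∈ Sf j, r k x) := by
      intro x
      rw [sq, Finset.sum_mul_sum]
      exact Finset.sum_congr rfl fun i _ => Finset.sum_congr rfl fun j _ => by ring
    have : (fun x => (∑ i, c i * ∏ k ∈ Sf i, r k x) ^ 2)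
        = fun x => ∑ i, ∑ j, (c i * c j) * ((∏ k ∈ Sf i, r k x) * ∏ k ∈ Sf j, r k x) :=
      funext hexp
    rw [this]
    exact integrable_finset_sum _ fun i _ => integrable_finset_sum _ fun j _ =>
      (walsh_integrable_RR hr hpm _ _).const_mul _
  have hsq_int : Integrable (fun x => ‖f x‖ ^ 2) μ := by
    have : (fun x => ‖f x‖ ^ 2) = fun x =>
        (∑ i, (a i).re * ∏ k ∈ Sf i, r k x) ^ 2 + (∑ i, (a i).im * ∏ k ∈ Sf i, r k x) ^ 2 :=
      funext hnormsq
    rw [this]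
    exact (hsq_int_aux _).add (hsq_int_aux _)
  -- Parseval
  have hL2 : ∫ x, ‖f x‖ ^ 2 ∂μ = S2 := by
    calc ∫ x, ‖f x‖ ^ 2 ∂μ
        = ∫ x, ((∑ i, (a i).re * ∏ k ∈ Sf i, r k x) ^ 2
            + (∑ i, (a i).im * ∏ k ∈ Sf i, r k x) ^ 2) ∂μ :=
          integral_congr_ae (Filter.Eventually.of_forall hnormsq)
      _ = (∫ x, (∑ i, (a i).re * ∏ k ∈ Sf i, r k x) ^ 2 ∂μ)
            + ∫ x, (∑ i, (a i).im * ∏ k ∈ Sf i, r k x) ^ 2 ∂μ :=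
          integral_add (hsq_int_aux _) (hsq_int_aux _)
      _ = (∑ i, (a i).re ^ 2) + ∑ i, (a i).im ^ 2 := by
          rw [walsh_parseval_real hr hind hmap hpm Sf hSinj,
            walsh_parseval_real hr hind hmap hpm Sf hSinj]
      _ = S2 := by
          rw [hS2_def, ← Finset.sum_add_distrib]
          refine Finset.sum_congr rfl fun i _ => ?_
          rw [Complex.sq_norm, Complex.normSq_apply]
          ring
  -- a.e. bound
  have hbound : ∀ᵐ x ∂μ, ‖f x‖ ≤ B := by
    filter_upwards [hpm] with x hx
    have habs : ∀ i : Fin n, ‖((∏ k ∈ Finset.range n,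
        if Nat.testBit (i : ℕ) k then r k x else 1 : ℝ) : ℂ)‖ = 1 := by
      intro i
      rw [Complex.norm_real, hW, Real.norm_eq_abs, Finset.abs_prod]
      refine Finset.prod_eq_one fun k _ => ?_
      rcases hx k with h | h <;> rw [h] <;> norm_num
    calc ‖f x‖ ≤ ∑ i, ‖a i * ((∏ k ∈ Finset.range n,
          if Nat.testBit (i : ℕ) k then r k x else 1 : ℝ) : ℂ)‖ := norm_sum_le _ _
      _ = ∑ i, ‖a i‖ := by
          refine Finset.sum_congr rfl fun i _ => ?_
          rw [norm_mul, habs i, mul_one]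
      _ ≤ B := by
          have h1 : (∑ i, ‖a i‖) ^ 2 ≤ (((Finset.univ : Finset (Fin n)).card : ℝ)) * ∑ i : Fin n, ‖a i‖ ^ 2 :=
            sq_sum_le_card_mul_sum_sq
          have h2 : (((Finset.univ : Finset (Fin n)).card : ℝ)) = (n:ℝ) := by
            rw [Finset.card_univ, Fintype.card_fin]
          have h3 : ∑ i, ‖a i‖ = Real.sqrt ((∑ i, ‖a i‖) ^ 2) :=
            (Real.sqrt_sq (Finset.sum_nonneg fun i _ => norm_nonneg _)).symm
          have h4 : (∑ i, ‖a i‖) ^ 2 ≤ (n:ℝ) * S2 := by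
            rw [h2] at h1; exact h1
          rw [h3, hB_def, ← Real.sqrt_mul (Nat.cast_nonneg n)]
          exact Real.sqrt_le_sqrt h4
  -- lintegral computations
  have hlint2 : ∫⁻ x, (‖f x‖₊ : ℝ≥0∞) ^ (2:ℝ) ∂μ = ENNReal.ofReal S2 := by
    have hpt : ∀ x, (‖f x‖₊ : ℝ≥0∞) ^ (2:ℝ) = ENNReal.ofReal (‖f x‖ ^ 2) := by
      intro x
      rw [← enorm_eq_nnnorm, ← ofReal_norm,
        ENNReal.ofReal_rpow_of_nonneg (norm_nonneg _) (by norm_num : (0:ℝ) ≤ 2)]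
      congr 1
      rw [show (2:ℝ) = ((2:ℕ):ℝ) by norm_num, Real.rpow_natCast]
    simp_rw [hpt]
    rw [← ofReal_integral_eq_lintegral_ofReal hsq_int
      (Filter.Eventually.of_forall fun x => sq_nonneg _), hL2]
  have hlintp : ∫⁻ x, (‖f x‖₊ : ℝ≥0∞) ^ p ∂μ ≤ ENNReal.ofReal (B ^ (p - 2) * S2) := by
    have step : ∀ᵐ x ∂μ, (‖f x‖₊ : ℝ≥0∞) ^ p
        ≤ ENNReal.ofReal B ^ (p - 2) * (‖f x‖₊ : ℝ≥0∞) ^ (2:ℝ) := by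
      filter_upwards [hbound] with x hx
      have h1 : (‖f x‖₊ : ℝ≥0∞) ^ p
          = (‖f x‖₊ : ℝ≥0∞) ^ (p - 2) * (‖f x‖₊ : ℝ≥0∞) ^ (2:ℝ) := by
        rw [← ENNReal.rpow_add_of_nonneg _ _ (by linarith) (by norm_num : (0:ℝ) ≤ 2)]
        norm_num
      rw [h1]
      refine mul_le_mul_left (ENNReal.rpow_le_rpow ?_ (by linarith)) _
      rw [← enorm_eq_nnnorm, ← ofReal_norm]
      exact ENNReal.ofReal_le_ofReal hx
    calc ∫⁻ x, (‖f x‖₊ : ℝ≥0∞) ^ p ∂μ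
        ≤ ∫⁻ x, ENNReal.ofReal B ^ (p - 2) * (‖f x‖₊ : ℝ≥0∞) ^ (2:ℝ) ∂μ :=
          lintegral_mono_ae step
      _ = ENNReal.ofReal B ^ (p - 2) * ENNReal.ofReal S2 := by
          rw [lintegral_const_mul' _ _
            (ENNReal.rpow_ne_top_of_nonneg (by linarith) ENNReal.ofReal_ne_top), hlint2]
      _ = ENNReal.ofReal (B ^ (p - 2) * S2) := by
          rw [ENNReal.ofReal_rpow_of_nonneg hBnn (by linarith),
            ← ENNReal.ofReal_mul (Real.rpow_nonneg hBnn _)]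
  -- the eLpNorm bound
  have hq0 : ENNReal.ofReal p ≠ 0 := (ENNReal.ofReal_pos.mpr hp0).ne'
  have hqt : ENNReal.ofReal p ≠ ⊤ := ENNReal.ofReal_ne_top
  have hnorm_le : eLpNorm f (ENNReal.ofReal p) μ
      ≤ ENNReal.ofReal ((B ^ (p - 2) * S2) ^ (1/p)) := by
    rw [eLpNorm_eq_lintegral_rpow_enorm_toReal hq0 hqt, ENNReal.toReal_ofReal hp0.le]
    calc (∫⁻ x, (‖f x‖₊ : ℝ≥0∞) ^ p ∂μ) ^ (1/p)
        ≤ (ENNReal.ofReal (B ^ (p - 2) * S2)) ^ (1/p) :=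
          ENNReal.rpow_le_rpow hlintp (by positivity)
      _ = ENNReal.ofReal ((B ^ (p - 2) * S2) ^ (1/p)) :=
          ENNReal.ofReal_rpow_of_nonneg (by positivity) (by positivity)
  -- put everything together
  calc ENNReal.ofReal (Real.sqrt (Real.log n) / Real.sqrt n) * eLpNorm f (ENNReal.ofReal p) μ
      ≤ ENNReal.ofReal (Real.sqrt (Real.log n) / Real.sqrt n) *
          ENNReal.ofReal ((B ^ (p - 2) * S2) ^ (1/p)) := mul_le_mul_right hnorm_le _
    _ = ENNReal.ofReal (Real.sqrt (Real.log n) / Real.sqrt n * (B ^ (p - 2) * S2) ^ (1/p)) :=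
        (ENNReal.ofReal_mul (by positivity)).symm
    _ ≤ ENNReal.ofReal (1 * Real.sqrt p * Real.sqrt S2) :=
        ENNReal.ofReal_le_ofReal (walsh_scalar n hn p hp S2 hS2nn)
end

section
/- Let T be a finite nonempty index set, (Ω,μ) a probability space, and for each t ∈ T let Z_t be an integrable complex-valued random variable on Ω with E Z_t = 0. On the product probability space Ω × Ω define Z̃_t(ω₁,ω₂) := Re Z_t(ω₁) + Im Z_t(ω₂). Then (1/2) E max_{t∈T} |Z_t| ≤ E max_{t∈T} |Z̃_t| ≤ 2 E max_{t∈T} |Z_t|. -/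
open MeasureTheory Finset

private lemma intSup {X : Type*} [MeasurableSpace X] {m : Measure X} {T : Type}
    [Fintype T] [Nonempty T] (f : T → X → ℝ) (hf : ∀ t, Integrable (f t) m) :
    Integrable (fun x => ⨆ t, f t x) m := by
  have h : ∀ (s : Finset T) (hs : s.Nonempty),
      Integrable (fun x => s.sup' hs (fun t => f t x)) m := by
    intro s hs
    induction hs using Finset.Nonempty.cons_induction with
    | singleton a => simpa using hf a
    | cons a s ha hs ih =>
        refine ((hf a).sup ih).congr (Filter.Eventually.of_forall fun x => ?_)
        exact (Finset.sup'_cons hs (fun t => f t x)).symm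
  have h2 := h Finset.univ Finset.univ_nonempty
  have : (fun x => Finset.univ.sup' Finset.univ_nonempty (fun t => f t x))
      = fun x => ⨆ t, f t x := by
    funext x; exact Finset.sup'_univ_eq_ciSup _
  rwa [this] at h2

/-- Comparison between a centered finite family of complex random variables `Z_t` and
the decoupled real process `Z̃_t(ω₁,ω₂) = Re Z_t(ω₁) + Im Z_t(ω₂)`:
`(1/2) E max_t |Z_t| ≤ E max_t |Z̃_t| ≤ 2 E max_t |Z_t|`. -/
theorem stmt18 (T : Type) [Fintype T] [Nonempty T]
    (Ω : Type) [MeasurableSpace Ω] (μ : Measure Ω) [IsProbabilityMeasure μ]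
    (Z : T → Ω → ℂ)
    (hint : ∀ t, Integrable (Z t) μ)
    (hmean : ∀ t, ∫ ω, Z t ω ∂μ = 0) :
    (1 / 2 : ℝ) * ∫ ω, ⨆ t, ‖Z t ω‖ ∂μ
        ≤ ∫ ω : Ω × Ω, ⨆ t, |(Z t ω.1).re + (Z t ω.2).im| ∂(μ.prod μ) ∧
      ∫ ω : Ω × Ω, ⨆ t, |(Z t ω.1).re + (Z t ω.2).im| ∂(μ.prod μ)
        ≤ 2 * ∫ ω, ⨆ t, ‖Z t ω‖ ∂μ := by
  classical
  have bdd : ∀ g : T → ℝ, BddAbove (Set.range g) := fun g => (Set.finite_range g).bddAbove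
  set M : Ω → ℝ := fun ω => ⨆ t, ‖Z t ω‖ with hMdef
  have hMint : Integrable M μ := intSup _ (fun t => (hint t).norm)
  have hRe : ∀ t, Integrable (fun ω => (Z t ω).re) μ := fun t => (hint t).re
  have hIm : ∀ t, Integrable (fun ω => (Z t ω).im) μ := fun t => (hint t).im
  have hReP : ∀ t, Integrable (fun z : Ω × Ω => (Z t z.1).re) (μ.prod μ) := by
    intro t
    have := (hRe t).mul_prod (integrable_const (μ := μ) (1:ℝ))
    simpa using this
  have hImP : ∀ t, Integrable (fun z : Ω × Ω => (Z t z.2).im) (μ.prod μ) := by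
    intro t
    have := (integrable_const (μ := μ) (1:ℝ)).mul_prod (hIm t)
    simpa using this
  have hFt : ∀ t, Integrable (fun z : Ω × Ω => |(Z t z.1).re + (Z t z.2).im|) (μ.prod μ) :=
    fun t => ((hReP t).add (hImP t)).abs
  have hF : Integrable (fun z : Ω × Ω => ⨆ t, |(Z t z.1).re + (Z t z.2).im|) (μ.prod μ) :=
    intSup _ hFt
  -- upper bound
  have hMP1 : Integrable (fun z : Ω × Ω => M z.1) (μ.prod μ) := by
    have := hMint.mul_prod (integrable_const (μ := μ) (1:ℝ)); simpa using this
  have hMP2 : Integrable (fun z : Ω × Ω => M z.2) (μ.prod μ) := by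
    have := (integrable_const (μ := μ) (1:ℝ)).mul_prod hMint; simpa using this
  have upper : ∫ z : Ω × Ω, ⨆ t, |(Z t z.1).re + (Z t z.2).im| ∂(μ.prod μ)
      ≤ 2 * ∫ ω, M ω ∂μ := by
    have h1 : ∫ z : Ω × Ω, ⨆ t, |(Z t z.1).re + (Z t z.2).im| ∂(μ.prod μ)
        ≤ ∫ z : Ω × Ω, (M z.1 + M z.2) ∂(μ.prod μ) := by
      refine integral_mono hF (hMP1.add hMP2) ?_
      intro z
      refine ciSup_le fun t => ?_
      have h2 : |(Z t z.1).re + (Z t z.2).im| ≤ ‖Z t z.1‖ + ‖Z t z.2‖ := by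
        refine (abs_add_le _ _).trans (add_le_add ?_ ?_)
        · simpa using Complex.abs_re_le_norm (Z t z.1)
        · simpa using Complex.abs_im_le_norm (Z t z.2)
      exact h2.trans (add_le_add (le_ciSup (f := fun t => ‖Z t z.1‖) (bdd _) t)
        (le_ciSup (f := fun t => ‖Z t z.2‖) (bdd _) t))
    have e1 : ∫ z : Ω × Ω, M z.1 ∂(μ.prod μ) = ∫ ω, M ω ∂μ := by
      have := integral_prod_mul (μ := μ) (ν := μ) M (fun _ => (1:ℝ)); simpa using this
    have e2 : ∫ z : Ω × Ω, M z.2 ∂(μ.prod μ) = ∫ ω, M ω ∂μ := by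
      have := integral_prod_mul (μ := μ) (ν := μ) (fun _ => (1:ℝ)) M; simpa using this
    have h3 : ∫ z : Ω × Ω, (M z.1 + M z.2) ∂(μ.prod μ) = 2 * ∫ ω, M ω ∂μ := by
      rw [integral_add hMP1 hMP2, e1, e2]; ring
    linarith
  -- centering
  have hmeanIm : ∀ t, ∫ ω, (Z t ω).im ∂μ = 0 := by
    intro t
    have := integral_im (μ := μ) (𝕜 := ℂ) (hint t)
    simp only [hmean t] at this
    simpa using this
  have hmeanRe : ∀ t, ∫ ω, (Z t ω).re ∂μ = 0 := by
    intro t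
    have := integral_re (μ := μ) (𝕜 := ℂ) (hint t)
    simp only [hmean t] at this
    simpa using this
  have hSupRe : Integrable (fun ω => ⨆ t, |(Z t ω).re|) μ := intSup _ fun t => (hRe t).abs
  have hSupIm : Integrable (fun ω => ⨆ t, |(Z t ω).im|) μ := intSup _ fun t => (hIm t).abs
  -- lower bound, real parts
  have lowRe : ∫ ω, (⨆ t, |(Z t ω).re|) ∂μ
      ≤ ∫ z : Ω × Ω, ⨆ t, |(Z t z.1).re + (Z t z.2).im| ∂(μ.prod μ) := by
    rw [integral_prod _ hF]
    refine integral_mono_ae hSupRe hF.integral_prod_left ?_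
    filter_upwards [hF.prod_right_ae] with ω₁ h1
    refine ciSup_le fun t => ?_
    have key : (Z t ω₁).re = ∫ ω₂, ((Z t ω₁).re + (Z t ω₂).im) ∂μ := by
      rw [integral_add (integrable_const _) (hIm t), integral_const, hmeanIm t]
      simp
    calc |(Z t ω₁).re| = |∫ ω₂, ((Z t ω₁).re + (Z t ω₂).im) ∂μ| := by rw [← key]
      _ ≤ ∫ ω₂, |(Z t ω₁).re + (Z t ω₂).im| ∂μ := by
          simpa [Real.norm_eq_abs] using
            norm_integral_le_integral_norm (fun ω₂ => (Z t ω₁).re + (Z t ω₂).im) (μ := μ)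
      _ ≤ ∫ ω₂, ⨆ s, |(Z s ω₁).re + (Z s ω₂).im| ∂μ := by
          exact integral_mono ((integrable_const _).add (hIm t)).abs h1
            fun ω₂ => le_ciSup (f := fun s => |(Z s ω₁).re + (Z s ω₂).im|) (bdd _) t
  -- lower bound, imaginary parts
  have lowIm : ∫ ω, (⨆ t, |(Z t ω).im|) ∂μ
      ≤ ∫ z : Ω × Ω, ⨆ t, |(Z t z.1).re + (Z t z.2).im| ∂(μ.prod μ) := by
    rw [integral_prod_symm _ hF]
    refine integral_mono_ae hSupIm hF.integral_prod_right ?_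
    filter_upwards [hF.prod_left_ae] with ω₂ h1
    refine ciSup_le fun t => ?_
    have key : (Z t ω₂).im = ∫ ω₁, ((Z t ω₁).re + (Z t ω₂).im) ∂μ := by
      rw [integral_add (hRe t) (integrable_const _), integral_const, hmeanRe t]
      simp
    calc |(Z t ω₂).im| = |∫ ω₁, ((Z t ω₁).re + (Z t ω₂).im) ∂μ| := by rw [← key]
      _ ≤ ∫ ω₁, |(Z t ω₁).re + (Z t ω₂).im| ∂μ := by
          simpa [Real.norm_eq_abs] using
            norm_integral_le_integral_norm (fun ω₁ => (Z t ω₁).re + (Z t ω₂).im) (μ := μ)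
      _ ≤ ∫ ω₁, ⨆ s, |(Z s ω₁).re + (Z s ω₂).im| ∂μ := by
          exact integral_mono ((hRe t).add (integrable_const _)).abs h1
            fun ω₁ => le_ciSup (f := fun s => |(Z s ω₁).re + (Z s ω₂).im|) (bdd _) t
  have final : ∫ ω, M ω ∂μ
      ≤ (∫ ω, ⨆ t, |(Z t ω).re| ∂μ) + ∫ ω, ⨆ t, |(Z t ω).im| ∂μ := by
    rw [← integral_add hSupRe hSupIm]
    refine integral_mono hMint (hSupRe.add hSupIm) fun ω => ?_
    refine ciSup_le fun t => ?_
    calc ‖Z t ω‖ ≤ |(Z t ω).re| + |(Z t ω).im| := by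
          simpa using Complex.norm_le_abs_re_add_abs_im (Z t ω)
      _ ≤ _ := add_le_add (le_ciSup (f := fun t => |(Z t ω).re|) (bdd _) t)
        (le_ciSup (f := fun t => |(Z t ω).im|) (bdd _) t)
  exact ⟨by linarith, upper⟩
end
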